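/- Let n ≥ 6 and let Γ_1,…,Γ_{n−2} be 3-element subsets of N = {1,…,n} such that every element of N has valence 2 or 3 and condition (†) holds. Let Π be the dual graph of Γ. Then for any two edges e_1, e_2 of Π, the graph obtained from Π by deleting e_1 and e_2 is still connected. -/

import Mathlib

open Finset

/-- The valence of `i ∈ N = {1,…,n}`: the number of hyperedges `Γ_j` containing `i`. -/
def valence (n : ℕ) (Γ : ℕ → Finset ℕ) (i : ℕ) : ℕ :=
  ((Finset.Icc 1 (n - 2)).filter fun j => i ∈ Γ j).card

/-- Adjacency in the dual graph `Π` of `Γ`: vertices are the triples (black,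
`Sum.inl j` for `j ∈ {1,…,n-2}`) and the valence-3 elements of `N` (white,
`Sum.inr i`); a black vertex `Γ_j` is joined to a white vertex `i` whenever `i ∈ Γ_j`,
and two distinct black vertices are joined whenever they share a valence-2 element. -/
def piAdj (n : ℕ) (Γ : ℕ → Finset ℕ) (x y : ℕ ⊕ ℕ) : Prop :=
  (∃ j i, ((x = Sum.inl j ∧ y = Sum.inr i) ∨ (x = Sum.inr i ∧ y = Sum.inl j)) ∧
      j ∈ Finset.Icc 1 (n - 2) ∧ valence n Γ i = 3 ∧ i ∈ Γ j) ∨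
  (∃ j j', x = Sum.inl j ∧ y = Sum.inl j' ∧ j ≠ j' ∧
      j ∈ Finset.Icc 1 (n - 2) ∧ j' ∈ Finset.Icc 1 (n - 2) ∧
      ∃ i, valence n Γ i = 2 ∧ i ∈ Γ j ∧ i ∈ Γ j')

/-- The vertex set of the dual graph `Π`. -/
def piVertexSet (n : ℕ) (Γ : ℕ → Finset ℕ) : Set (ℕ ⊕ ℕ) :=
  {x | (∃ j ∈ Finset.Icc 1 (n - 2), x = Sum.inl j) ∨
       (∃ i, valence n Γ i = 3 ∧ x = Sum.inr i)}

lemma three_distinct {F : Finset ℕ} (h : 3 ≤ F.card) :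
    ∃ a ∈ F, ∃ b ∈ F, ∃ c ∈ F, a ≠ b ∧ a ≠ c ∧ b ≠ c := by
  obtain ⟨a, ha⟩ := Finset.card_pos.mp (show 0 < F.card by omega)
  have h1 := Finset.card_erase_of_mem ha
  obtain ⟨b, hb⟩ := Finset.card_pos.mp (show 0 < (F.erase a).card by omega)
  have h2 := Finset.card_erase_of_mem hb
  obtain ⟨c, hc⟩ := Finset.card_pos.mp (show 0 < ((F.erase a).erase b).card by omega)
  have hcb : c ≠ b := Finset.ne_of_mem_erase hc
  have hc' := Finset.mem_of_mem_erase hc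
  have hca : c ≠ a := Finset.ne_of_mem_erase hc'
  have hba : b ≠ a := Finset.ne_of_mem_erase hb
  exact ⟨a, ha, b, Finset.mem_of_mem_erase hb, c, Finset.mem_of_mem_erase hc',
    hba.symm, hca.symm, hcb.symm⟩

lemma inter_card_le (n : ℕ) (hn : 6 ≤ n) (Γ : ℕ → Finset ℕ)
    (hcard : ∀ j ∈ Finset.Icc 1 (n - 2), (Γ j).card = 3)
    (hdag : ∀ S ⊆ Finset.Icc 1 (n - 2), 2 ≤ S.card → S.card ≤ n - 3 →
      S.card + 3 ≤ (S.biUnion Γ).card)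
    {j j' : ℕ} (hj : j ∈ Finset.Icc 1 (n - 2)) (hj' : j' ∈ Finset.Icc 1 (n - 2))
    (hne : j ≠ j') : (Γ j ∩ Γ j').card ≤ 1 := by
  have hsub2 : ({j, j'} : Finset ℕ) ⊆ Finset.Icc 1 (n - 2) := by
    intro a ha
    rcases Finset.mem_insert.mp ha with rfl | ha
    · exact hj
    · rw [Finset.mem_singleton.mp ha]; exact hj'
  have hc2 : ({j, j'} : Finset ℕ).card = 2 := Finset.card_pair hne
  have h5 := hdag {j, j'} hsub2 (by rw [hc2]) (by rw [hc2]; omega)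
  have hb : ({j, j'} : Finset ℕ).biUnion Γ = Γ j ∪ Γ j' := by
    rw [show ({j, j'} : Finset ℕ) = insert j {j'} from rfl, Finset.biUnion_insert,
      Finset.singleton_biUnion]
  rw [hc2, hb] at h5
  have hu := Finset.card_union_add_card_inter (Γ j) (Γ j')
  have h3 := hcard j hj
  have h3' := hcard j' hj'
  omega

open Finset

lemma boundary_big (n : ℕ) (hn : 6 ≤ n) (Γ : ℕ → Finset ℕ)
    (hsub : ∀ j ∈ Finset.Icc 1 (n - 2), Γ j ⊆ Finset.Icc 1 n)
    (hcard : ∀ j ∈ Finset.Icc 1 (n - 2), (Γ j).card = 3)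
    (hval : ∀ i ∈ Finset.Icc 1 n, valence n Γ i = 2 ∨ valence n Γ i = 3)
    (hdag : ∀ S ⊆ Finset.Icc 1 (n - 2), 2 ≤ S.card → S.card ≤ n - 3 →
      S.card + 3 ≤ (S.biUnion Γ).card)
    (S T : Finset ℕ) (hS : S ⊆ Finset.Icc 1 (n - 2)) (hT : T ⊆ Finset.Icc 1 (n - 2))
    (hdisj : Disjoint S T) (hunion : S ∪ T = Finset.Icc 1 (n - 2))
    (hSne : S.Nonempty) (hTne : T.Nonempty) :
    3 ≤ ((S.biUnion Γ) ∩ (T.biUnion Γ)).card := by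
  have hST : S.card + T.card = n - 2 := by
    have h := Finset.card_union_of_disjoint hdisj
    rw [hunion, Nat.card_Icc] at h
    omega
  have hUVsub : (S.biUnion Γ) ∪ (T.biUnion Γ) ⊆ Finset.Icc 1 n := by
    apply Finset.union_subset
    · exact Finset.biUnion_subset.mpr fun j hj => hsub j (hS hj)
    · exact Finset.biUnion_subset.mpr fun j hj => hsub j (hT hj)
  have hIccsub : Finset.Icc 1 n ⊆ (S.biUnion Γ) ∪ (T.biUnion Γ) := by
    intro i hi
    have hv := hval i hi
    have hpos : 0 < ((Finset.Icc 1 (n - 2)).filter fun j => i ∈ Γ j).card := by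
      unfold valence at hv; omega
    obtain ⟨j, hj⟩ := Finset.card_pos.mp hpos
    rw [Finset.mem_filter] at hj
    have hjst : j ∈ S ∪ T := by rw [hunion]; exact hj.1
    rcases Finset.mem_union.mp hjst with h | h
    · exact Finset.mem_union_left _ (Finset.mem_biUnion.mpr ⟨j, h, hj.2⟩)
    · exact Finset.mem_union_right _ (Finset.mem_biUnion.mpr ⟨j, h, hj.2⟩)
  have hUV : ((S.biUnion Γ) ∪ (T.biUnion Γ)).card = n := by
    rw [Finset.Subset.antisymm hUVsub hIccsub, Nat.card_Icc]; omega
  have hkey := Finset.card_union_add_card_inter (S.biUnion Γ) (T.biUnion Γ)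
  rw [hUV] at hkey
  have hS1 := hSne.card_pos
  have hT1 := hTne.card_pos
  rcases Nat.lt_or_ge S.card 2 with hS2 | hS2
  · have hSc : S.card = 1 := by omega
    obtain ⟨j, rfl⟩ := Finset.card_eq_one.mp hSc
    have hjIcc : j ∈ Finset.Icc 1 (n - 2) := hS (Finset.mem_singleton_self j)
    have hU : (({j} : Finset ℕ).biUnion Γ).card = 3 := by
      rw [Finset.singleton_biUnion]; exact hcard j hjIcc
    have hVge := hdag T hT (by omega) (by omega)
    omega
  rcases Nat.lt_or_ge T.card 2 with hT2 | hT2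
  · have hTc : T.card = 1 := by omega
    obtain ⟨j, rfl⟩ := Finset.card_eq_one.mp hTc
    have hjIcc : j ∈ Finset.Icc 1 (n - 2) := hT (Finset.mem_singleton_self j)
    have hV : (({j} : Finset ℕ).biUnion Γ).card = 3 := by
      rw [Finset.singleton_biUnion]; exact hcard j hjIcc
    have hUge := hdag S hS (by omega) (by omega)
    omega
  · have hUge := hdag S hS hS2 (by omega)
    have hVge := hdag T hT hT2 (by omega)
    omega

open Finset

def MemTag (n : ℕ) (Γ : ℕ → Finset ℕ) (i : ℕ) (a b : ℕ ⊕ ℕ) : Prop :=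
  (∃ j, a = Sum.inr i ∧ b = Sum.inl j) ∨
  (∃ j, a = Sum.inl j ∧ b = Sum.inr i) ∨
  (∃ j j', a = Sum.inl j ∧ b = Sum.inl j' ∧ j ∈ Finset.Icc 1 (n - 2) ∧
    j' ∈ Finset.Icc 1 (n - 2) ∧ j ≠ j' ∧ i ∈ Γ j ∧ i ∈ Γ j')

lemma memTag_inj (n : ℕ) (Γ : ℕ → Finset ℕ)
    (hinter : ∀ j j', j ∈ Finset.Icc 1 (n - 2) → j' ∈ Finset.Icc 1 (n - 2) → j ≠ j' →
      (Γ j ∩ Γ j').card ≤ 1)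
    {i i' : ℕ} {a b : ℕ ⊕ ℕ} (h : MemTag n Γ i a b) (h' : MemTag n Γ i' a b) : i = i' := by
  rcases h with ⟨j, rfl, rfl⟩ | ⟨j, rfl, rfl⟩ |
    ⟨j, j', rfl, rfl, hj, hj', hne, hi1, hi2⟩ <;>
  rcases h' with ⟨k, hk1, hk2⟩ | ⟨k, hk1, hk2⟩ |
    ⟨k, k', hk1, hk2, hk3, hk4, hk5, hk6, hk7⟩
  · exact Sum.inr.inj hk1
  · exact absurd hk2 (by simp)
  · exact absurd hk1 (by simp)
  · exact absurd hk1 (by simp)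
  · exact Sum.inr.inj hk2
  · exact absurd hk2 (by simp)
  · exact absurd hk1 (by simp)
  · exact absurd hk2 (by simp)
  · have hcle := hinter j j' hj hj' hne
    exact Finset.card_le_one.mp hcle i (Finset.mem_inter.mpr ⟨hi1, hi2⟩) i'
      (Finset.mem_inter.mpr ⟨Sum.inl.inj hk1 ▸ hk6, Sum.inl.inj hk2 ▸ hk7⟩)

/-- Key combinatorial lemma: given any predicate `A` (thought of as one side of a cut)
containing a vertex `x` of `Π` and avoiding a vertex `y` of `Π`, there are at least
three pairwise-distinct crossing edges of `Π`. -/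
lemma cut_ge_three (n : ℕ) (hn : 6 ≤ n) (Γ : ℕ → Finset ℕ)
    (hsub : ∀ j ∈ Finset.Icc 1 (n - 2), Γ j ⊆ Finset.Icc 1 n)
    (hcard : ∀ j ∈ Finset.Icc 1 (n - 2), (Γ j).card = 3)
    (hval : ∀ i ∈ Finset.Icc 1 n, valence n Γ i = 2 ∨ valence n Γ i = 3)
    (hdag : ∀ S ⊆ Finset.Icc 1 (n - 2), 2 ≤ S.card → S.card ≤ n - 3 →
      S.card + 3 ≤ (S.biUnion Γ).card)
    (A : (ℕ ⊕ ℕ) → Prop) (x y : ℕ ⊕ ℕ)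
    (hx : x ∈ piVertexSet n Γ) (hy : y ∈ piVertexSet n Γ)
    (hxA : A x) (hyA : ¬ A y) :
    ∃ a₁ b₁ a₂ b₂ a₃ b₃ : ℕ ⊕ ℕ,
      (A a₁ ∧ ¬ A b₁ ∧ piAdj n Γ a₁ b₁) ∧
      (A a₂ ∧ ¬ A b₂ ∧ piAdj n Γ a₂ b₂) ∧
      (A a₃ ∧ ¬ A b₃ ∧ piAdj n Γ a₃ b₃) ∧
      ¬(a₁ = a₂ ∧ b₁ = b₂) ∧ ¬(a₁ = a₃ ∧ b₁ = b₃) ∧ ¬(a₂ = a₃ ∧ b₂ = b₃) := by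
  classical
  set S : Finset ℕ := (Finset.Icc 1 (n - 2)).filter (fun j => A (Sum.inl j)) with hSdef
  set T : Finset ℕ := (Finset.Icc 1 (n - 2)).filter (fun j => ¬ A (Sum.inl j)) with hTdef
  have hST_union : S ∪ T = Finset.Icc 1 (n - 2) :=
    Finset.filter_union_filter_not_eq _ _
  have hST_disj : Disjoint S T := Finset.disjoint_filter_filter_not _ _ _
  rcases Finset.eq_empty_or_nonempty S with hS0 | hSne
  · -- S is empty : x must be a white vertex, all its three triples are outside A
    rcases hx with ⟨j, hj, hxeq⟩ | ⟨i, hi3, hxeq⟩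
    · exfalso
      have hjS : j ∈ S := Finset.mem_filter.mpr ⟨hj, hxeq ▸ hxA⟩
      rw [hS0] at hjS
      exact absurd hjS (Finset.notMem_empty j)
    · have hF3 : ((Finset.Icc 1 (n - 2)).filter fun j => i ∈ Γ j).card = 3 := hi3
      obtain ⟨j1, hj1, j2, hj2, j3, hj3, h12, h13, h23⟩ := three_distinct (show 3 ≤ ((Finset.Icc 1 (n - 2)).filter fun j => i ∈ Γ j).card by omega)
      have hAx : A (Sum.inr i) := hxeq ▸ hxA
      have hnotA : ∀ j, j ∈ (Finset.Icc 1 (n - 2)).filter (fun j => i ∈ Γ j) →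
          ¬ A (Sum.inl j) := by
        intro j hj hAj
        have hjS : j ∈ S := Finset.mem_filter.mpr ⟨(Finset.mem_filter.mp hj).1, hAj⟩
        rw [hS0] at hjS
        exact absurd hjS (Finset.notMem_empty j)
      have hadj : ∀ j, j ∈ (Finset.Icc 1 (n - 2)).filter (fun j => i ∈ Γ j) →
          piAdj n Γ (Sum.inr i) (Sum.inl j) := by
        intro j hj
        exact Or.inl ⟨j, i, Or.inr ⟨rfl, rfl⟩, (Finset.mem_filter.mp hj).1, hi3,
          (Finset.mem_filter.mp hj).2⟩
      refine ⟨Sum.inr i, Sum.inl j1, Sum.inr i, Sum.inl j2, Sum.inr i, Sum.inl j3,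
        ⟨hAx, hnotA j1 hj1, hadj j1 hj1⟩, ⟨hAx, hnotA j2 hj2, hadj j2 hj2⟩,
        ⟨hAx, hnotA j3 hj3, hadj j3 hj3⟩, ?_, ?_, ?_⟩
      · rintro ⟨-, h⟩; exact h12 (Sum.inl.inj h)
      · rintro ⟨-, h⟩; exact h13 (Sum.inl.inj h)
      · rintro ⟨-, h⟩; exact h23 (Sum.inl.inj h)
  rcases Finset.eq_empty_or_nonempty T with hT0 | hTne
  · -- T is empty : y must be a white vertex, all its three triples are inside A
    rcases hy with ⟨j, hj, hyeq⟩ | ⟨i, hi3, hyeq⟩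
    · exfalso
      by_cases hAj : A (Sum.inl j)
      · exact hyA (hyeq ▸ hAj)
      · have hjT : j ∈ T := Finset.mem_filter.mpr ⟨hj, hAj⟩
        rw [hT0] at hjT
        exact absurd hjT (Finset.notMem_empty j)
    · have hF3 : ((Finset.Icc 1 (n - 2)).filter fun j => i ∈ Γ j).card = 3 := hi3
      obtain ⟨j1, hj1, j2, hj2, j3, hj3, h12, h13, h23⟩ := three_distinct (show 3 ≤ ((Finset.Icc 1 (n - 2)).filter fun j => i ∈ Γ j).card by omega)
      have hAy : ¬ A (Sum.inr i) := fun h => hyA (hyeq ▸ h)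
      have hisA : ∀ j, j ∈ (Finset.Icc 1 (n - 2)).filter (fun j => i ∈ Γ j) →
          A (Sum.inl j) := by
        intro j hj
        by_contra hAj
        have hjT : j ∈ T := Finset.mem_filter.mpr ⟨(Finset.mem_filter.mp hj).1, hAj⟩
        rw [hT0] at hjT
        exact absurd hjT (Finset.notMem_empty j)
      have hadj : ∀ j, j ∈ (Finset.Icc 1 (n - 2)).filter (fun j => i ∈ Γ j) →
          piAdj n Γ (Sum.inl j) (Sum.inr i) := by
        intro j hj
        exact Or.inl ⟨j, i, Or.inl ⟨rfl, rfl⟩, (Finset.mem_filter.mp hj).1, hi3,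
          (Finset.mem_filter.mp hj).2⟩
      refine ⟨Sum.inl j1, Sum.inr i, Sum.inl j2, Sum.inr i, Sum.inl j3, Sum.inr i,
        ⟨hisA j1 hj1, hAy, hadj j1 hj1⟩, ⟨hisA j2 hj2, hAy, hadj j2 hj2⟩,
        ⟨hisA j3 hj3, hAy, hadj j3 hj3⟩, ?_, ?_, ?_⟩
      · rintro ⟨h, -⟩; exact h12 (Sum.inl.inj h)
      · rintro ⟨h, -⟩; exact h13 (Sum.inl.inj h)
      · rintro ⟨h, -⟩; exact h23 (Sum.inl.inj h)
  · -- main case: both sides contain a triple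
    have hb3 := boundary_big n hn Γ hsub hcard hval hdag S T
      (Finset.filter_subset _ _) (Finset.filter_subset _ _) hST_disj hST_union hSne hTne
    obtain ⟨i1, hi1, i2, hi2, i3, hi3, h12, h13, h23⟩ := three_distinct hb3
    have spec : ∀ i ∈ (S.biUnion Γ) ∩ (T.biUnion Γ),
        ∃ a b, A a ∧ ¬ A b ∧ piAdj n Γ a b ∧ MemTag n Γ i a b := by
      intro i hi
      obtain ⟨hiU, hiV⟩ := Finset.mem_inter.mp hi
      obtain ⟨j, hjS, hij⟩ := Finset.mem_biUnion.mp hiU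
      obtain ⟨j', hj'T, hij'⟩ := Finset.mem_biUnion.mp hiV
      have hjIcc := (Finset.mem_filter.mp hjS).1
      have hjA := (Finset.mem_filter.mp hjS).2
      have hj'Icc := (Finset.mem_filter.mp hj'T).1
      have hj'A := (Finset.mem_filter.mp hj'T).2
      have hiN : i ∈ Finset.Icc 1 n := hsub j hjIcc hij
      have hjj' : j ≠ j' := by rintro rfl; exact hj'A hjA
      rcases hval i hiN with hv | hv
      · exact ⟨Sum.inl j, Sum.inl j', hjA, hj'A,
          Or.inr ⟨j, j', rfl, rfl, hjj', hjIcc, hj'Icc, i, hv, hij, hij'⟩,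
          Or.inr (Or.inr ⟨j, j', rfl, rfl, hjIcc, hj'Icc, hjj', hij, hij'⟩)⟩
      · by_cases hA : A (Sum.inr i)
        · exact ⟨Sum.inr i, Sum.inl j', hA, hj'A,
            Or.inl ⟨j', i, Or.inr ⟨rfl, rfl⟩, hj'Icc, hv, hij'⟩,
            Or.inl ⟨j', rfl, rfl⟩⟩
        · exact ⟨Sum.inl j, Sum.inr i, hjA, hA,
            Or.inl ⟨j, i, Or.inl ⟨rfl, rfl⟩, hjIcc, hv, hij⟩,
            Or.inr (Or.inl ⟨j, rfl, rfl⟩)⟩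
    obtain ⟨a1, b1, hA1, hB1, hadj1, hm1⟩ := spec i1 hi1
    obtain ⟨a2, b2, hA2, hB2, hadj2, hm2⟩ := spec i2 hi2
    obtain ⟨a3, b3, hA3, hB3, hadj3, hm3⟩ := spec i3 hi3
    have hint : ∀ j j', j ∈ Finset.Icc 1 (n - 2) → j' ∈ Finset.Icc 1 (n - 2) → j ≠ j' →
        (Γ j ∩ Γ j').card ≤ 1 := fun j j' hj hj' hne =>
      inter_card_le n hn Γ hcard hdag hj hj' hne
    refine ⟨a1, b1, a2, b2, a3, b3, ⟨hA1, hB1, hadj1⟩, ⟨hA2, hB2, hadj2⟩,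
      ⟨hA3, hB3, hadj3⟩, ?_, ?_, ?_⟩
    · rintro ⟨rfl, rfl⟩; exact h12 (memTag_inj n Γ hint hm1 hm2)
    · rintro ⟨rfl, rfl⟩; exact h13 (memTag_inj n Γ hint hm1 hm3)
    · rintro ⟨rfl, rfl⟩; exact h23 (memTag_inj n Γ hint hm2 hm3)

/-- For a 3-uniform hypergraph `Γ_1,…,Γ_{n-2}` on `{1,…,n}` (n ≥ 6) with all valences
2 or 3, satisfying condition (†), the dual graph `Π` remains connected after deleting
any two edges: any two vertices are still joined by a path avoiding both deleted
edges. -/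
theorem dual_graph_three_edge_connected (n : ℕ) (hn : 6 ≤ n) (Γ : ℕ → Finset ℕ)
    (hsub : ∀ j ∈ Finset.Icc 1 (n - 2), Γ j ⊆ Finset.Icc 1 n)
    (hcard : ∀ j ∈ Finset.Icc 1 (n - 2), (Γ j).card = 3)
    (hval : ∀ i ∈ Finset.Icc 1 n, valence n Γ i = 2 ∨ valence n Γ i = 3)
    (hdag : ∀ S ⊆ Finset.Icc 1 (n - 2), 2 ≤ S.card → S.card ≤ n - 3 →
      S.card + 3 ≤ (S.biUnion Γ).card)
    (e1x e1y e2x e2y : ℕ ⊕ ℕ)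
    (he1 : piAdj n Γ e1x e1y) (he2 : piAdj n Γ e2x e2y) :
    ∀ x ∈ piVertexSet n Γ, ∀ y ∈ piVertexSet n Γ,
      Relation.ReflTransGen
        (fun u w => piAdj n Γ u w ∧
          ¬((u = e1x ∧ w = e1y) ∨ (u = e1y ∧ w = e1x)) ∧
          ¬((u = e2x ∧ w = e2y) ∨ (u = e2y ∧ w = e2x))) x y := by
  classical
  intro x hx y hy
  by_contra hxy
  obtain ⟨a1, b1, a2, b2, a3, b3, ⟨hA1, hB1, hadj1⟩, ⟨hA2, hB2, hadj2⟩,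
      ⟨hA3, hB3, hadj3⟩, h12, h13, h23⟩ :=
    cut_ge_three n hn Γ hsub hcard hval hdag
      (fun z => Relation.ReflTransGen
        (fun u w => piAdj n Γ u w ∧
          ¬((u = e1x ∧ w = e1y) ∨ (u = e1y ∧ w = e1x)) ∧
          ¬((u = e2x ∧ w = e2y) ∨ (u = e2y ∧ w = e2x))) x z)
      x y hx hy Relation.ReflTransGen.refl hxy
  -- abbreviations
  set A : (ℕ ⊕ ℕ) → Prop := fun z => Relation.ReflTransGen
        (fun u w => piAdj n Γ u w ∧
          ¬((u = e1x ∧ w = e1y) ∨ (u = e1y ∧ w = e1x)) ∧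
          ¬((u = e2x ∧ w = e2y) ∨ (u = e2y ∧ w = e2x))) x z with hAdef
  -- every crossing edge must be one of the two deleted edges
  have hstep : ∀ a b, A a → ¬ A b → piAdj n Γ a b →
      ((a = e1x ∧ b = e1y) ∨ (a = e1y ∧ b = e1x)) ∨
      ((a = e2x ∧ b = e2y) ∨ (a = e2y ∧ b = e2x)) := by
    intro a b ha hb hadj
    by_cases h1 : (a = e1x ∧ b = e1y) ∨ (a = e1y ∧ b = e1x)
    · exact Or.inl h1
    by_cases h2 : (a = e2x ∧ b = e2y) ∨ (a = e2y ∧ b = e2x)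
    · exact Or.inr h2
    · exact absurd (ha.tail ⟨hadj, h1, h2⟩) hb
  -- two crossing edges equal to the same deleted edge coincide
  have huniq : ∀ (px py a b a' b' : ℕ ⊕ ℕ), A a → ¬ A b → A a' → ¬ A b' →
      ((a = px ∧ b = py) ∨ (a = py ∧ b = px)) →
      ((a' = px ∧ b' = py) ∨ (a' = py ∧ b' = px)) → a = a' ∧ b = b' := by
    rintro px py a b a' b' ha hb ha' hb' (⟨rfl, rfl⟩ | ⟨rfl, rfl⟩) (⟨h1, h2⟩ | ⟨h1, h2⟩)
    · exact ⟨h1.symm, h2.symm⟩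
    · exact absurd (h1 ▸ ha') hb
    · exact absurd (h1 ▸ ha') hb
    · exact ⟨h1.symm, h2.symm⟩
  have d1 := hstep a1 b1 hA1 hB1 hadj1
  have d2 := hstep a2 b2 hA2 hB2 hadj2
  have d3 := hstep a3 b3 hA3 hB3 hadj3
  rcases d1 with d1 | d1 <;> rcases d2 with d2 | d2 <;> rcases d3 with d3 | d3
  · exact h12 (huniq e1x e1y a1 b1 a2 b2 hA1 hB1 hA2 hB2 d1 d2)
  · exact h12 (huniq e1x e1y a1 b1 a2 b2 hA1 hB1 hA2 hB2 d1 d2)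
  · exact h13 (huniq e1x e1y a1 b1 a3 b3 hA1 hB1 hA3 hB3 d1 d3)
  · exact h23 (huniq e2x e2y a2 b2 a3 b3 hA2 hB2 hA3 hB3 d2 d3)
  · exact h23 (huniq e1x e1y a2 b2 a3 b3 hA2 hB2 hA3 hB3 d2 d3)
  · exact h13 (huniq e2x e2y a1 b1 a3 b3 hA1 hB1 hA3 hB3 d1 d3)
  · exact h12 (huniq e2x e2y a1 b1 a2 b2 hA1 hB1 hA2 hB2 d1 d2)
  · exact h12 (huniq e2x e2y a1 b1 a2 b2 hA1 hB1 hA2 hB2 d1 d2)
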